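/- The p×p matrix C - ((M-1)/M)·D = ((M+1)/M)·D - D·Σ⁻¹·D is positive semidefinite, where D is a nonnegative diagonal matrix satisfying ((M+1)/M)·Σ - D ⪰ 0, Σ is positive definite, and C = 2D - D·Σ⁻¹·D. -/

import Mathlib

open Matrix

/-- If `Σ` is positive definite, `D = diag(s)` with `s ≥ 0` satisfies
`((M+1)/M)·Σ - D ⪰ 0`, then `C - ((M-1)/M)·D = ((M+1)/M)·D - D·Σ⁻¹·D` is positive
semidefinite, where `C = 2D - D·Σ⁻¹·D`. -/
theorem ghostknockoff_block_psd {p : ℕ} (M : ℕ) (hM : 1 ≤ M)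
    (S : Matrix (Fin p) (Fin p) ℝ) (hS : S.PosDef)
    (s : Fin p → ℝ) (hs : ∀ j, 0 ≤ s j)
    (D : Matrix (Fin p) (Fin p) ℝ) (hD : D = Matrix.diagonal s)
    (hconstraint : ((((M : ℝ) + 1) / (M : ℝ)) • S - D).PosSemidef)
    (C : Matrix (Fin p) (Fin p) ℝ) (hC : C = 2 • D - D * S⁻¹ * D) :
    (C - (((M : ℝ) - 1) / (M : ℝ)) • D).PosSemidef ∧
      C - (((M : ℝ) - 1) / (M : ℝ)) • D = (((M : ℝ) + 1) / (M : ℝ)) • D - D * S⁻¹ * D := by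
  have hMpos : (0 : ℝ) < (M : ℝ) := by exact_mod_cast Nat.lt_of_lt_of_le Nat.zero_lt_one hM
  set c : ℝ := ((M : ℝ) + 1) / (M : ℝ) with hc
  have hcpos : 0 < c := by positivity
  have heq : C - (((M : ℝ) - 1) / (M : ℝ)) • D = c • D - D * S⁻¹ * D := by
    subst hC
    have h2c : (2 : ℝ) - ((M : ℝ) - 1) / (M : ℝ) = c := by
      rw [hc]; field_simp; ring
    ext i j
    simp only [Matrix.sub_apply, Matrix.smul_apply]
    simp only [smul_eq_mul, nsmul_eq_mul, Nat.cast_ofNat]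
    linear_combination D i j * h2c
  refine ⟨?_, heq⟩
  rw [heq]
  have hdet : IsUnit S.det := isUnit_iff_ne_zero.mpr hS.det_pos.ne'
  have hSinv : S⁻¹.PosDef := hS.inv
  rw [posSemidef_iff_dotProduct_mulVec]
  constructor
  · -- Hermitian
    have hDh : D.IsHermitian := by
      rw [hD]; exact isHermitian_diagonal s
    have h1 : (c • D).IsHermitian := by
      unfold Matrix.IsHermitian
      rw [conjTranspose_smul, hDh.eq, star_trivial]
    have h2 : (D * S⁻¹ * D).IsHermitian := by
      have := isHermitian_mul_mul_conjTranspose D hSinv.isHermitian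
      rwa [hDh.eq] at this
    exact h1.sub h2
  · intro x
    have hsx : star x = x := star_trivial x
    rw [hsx]
    set y : Fin p → ℝ := D *ᵥ x with hy
    set z : Fin p → ℝ := S⁻¹ *ᵥ y with hz
    have hSz : S *ᵥ z = y := by
      rw [hz, mulVec_mulVec, Matrix.mul_nonsing_inv S hdet, one_mulVec]
    set a : ℝ := x ⬝ᵥ y with ha
    set b : ℝ := y ⬝ᵥ z with hb
    set d : ℝ := z ⬝ᵥ (D *ᵥ z) with hdd
    have hmv : (c • D - D * S⁻¹ * D) *ᵥ x = c • y - D *ᵥ z := by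
      rw [sub_mulVec, smul_mulVec, hy, ← mulVec_mulVec, ← mulVec_mulVec]
    have hbz : x ⬝ᵥ (D *ᵥ z) = b := by
      rw [hb, hy, hD]
      simp [dotProduct, mulVec_diagonal]
      apply Finset.sum_congr rfl
      intro i _
      ring
    have hgoal : x ⬝ᵥ ((c • D - D * S⁻¹ * D) *ᵥ x) = c * a - b := by
      rw [hmv, dotProduct_sub, dotProduct_smul, smul_eq_mul, hbz, ha]
    rw [hgoal]
    -- a ≥ 0
    have ha0 : 0 ≤ a := by
      rw [ha, hy, hD]
      simp [dotProduct, mulVec_diagonal]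
      apply Finset.sum_nonneg
      intro i _
      have := hs i
      nlinarith [sq_nonneg (x i)]
    -- b ≥ 0
    have hb0 : 0 ≤ b := by
      have := hSinv.posSemidef.dotProduct_mulVec_nonneg y
      rwa [star_trivial] at this
    -- constraint: d ≤ c * b
    have hdb : d ≤ c * b := by
      have h := hconstraint.dotProduct_mulVec_nonneg z
      rw [star_trivial, sub_mulVec, smul_mulVec, hSz, dotProduct_sub,
        dotProduct_smul, smul_eq_mul] at h
      have hbz' : z ⬝ᵥ y = b := by rw [hb, dotProduct_comm]
      rw [hbz'] at h
      rw [hdd]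
      linarith
    -- Cauchy-Schwarz: b^2 ≤ a * d
    have hcs : b ^ 2 ≤ a * d := by
      have key := Finset.sum_mul_sq_le_sq_mul_sq Finset.univ
        (fun i => Real.sqrt (s i) * x i) (fun i => Real.sqrt (s i) * z i)
      have hbsum : b = ∑ i, (Real.sqrt (s i) * x i) * (Real.sqrt (s i) * z i) := by
        rw [hb, hy, hD]
        simp [dotProduct, mulVec_diagonal]
        apply Finset.sum_congr rfl
        intro i _
        rw [show Real.sqrt (s i) * x i * (Real.sqrt (s i) * z i)
            = (Real.sqrt (s i) * Real.sqrt (s i)) * (x i * z i) by ring,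
          Real.mul_self_sqrt (hs i)]
        ring
      have hasum : a = ∑ i, (Real.sqrt (s i) * x i) ^ 2 := by
        rw [ha, hy, hD]
        simp [dotProduct, mulVec_diagonal]
        apply Finset.sum_congr rfl
        intro i _
        rw [mul_pow, Real.sq_sqrt (hs i)]
        ring
      have hdsum : d = ∑ i, (Real.sqrt (s i) * z i) ^ 2 := by
        rw [hdd, hD]
        simp [dotProduct, mulVec_diagonal]
        apply Finset.sum_congr rfl
        intro i _
        rw [mul_pow, Real.sq_sqrt (hs i)]
        ring
      rw [hbsum, hasum, hdsum]
      exact key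
    nlinarith [mul_nonneg hcpos.le ha0, sq_nonneg b]
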